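/- Let n > 3t. Suppose no set of n - t distinct processes all sent value w in round r. Then in round r + 1 the value w fails the validity rule 'n - t messages for w from the previous round', and in round r + 2 (where w equals the parity (r+1) mod 2 case requiring n - t messages from round r) w also fails validity; hence if non-faulty processes only broadcast valid values, no non-faulty process broadcasts w in rounds r + 1 or r + 2, and by induction w is invalid in all rounds after r. -/
import Mathlib


/-- Persistence of invalidity (inside Lemma 3): a value w that misses its quorum in round r
(with w = (r+1) mod 2) is invalid, and never broadcast by non-faulty processes, in every
round after r. -/
theorem invalidity_persists {α : Type*} [DecidableEq α] (P F : Finset α) (n t r : ℕ)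
    (sent : ℕ → α → Bool → Prop) (valid : ℕ → Bool → Prop) (w : Bool)
    (hn : P.card = n) (ht : 3 * t < n)
    (hF : F ⊆ P) (hFcard : F.card ≤ t)
    (hr : 2 < r)
    (hw : w = decide ((r + 1) % 2 = 1))
    -- non-faulty processes broadcast at most one value per round
    (hnonfaulty : ∀ r' : ℕ, ∀ p ∈ P, p ∉ F →
      ∀ b₀ b₁ : Bool, sent r' p b₀ → sent r' p b₁ → b₀ = b₁)
    -- non-faulty processes broadcast only valid values
    (hbcast : ∀ r' : ℕ, ∀ p ∈ P, p ∉ F → ∀ v : Bool, sent r' p v → valid r' v)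
    -- validity rules for rounds > 2 (special round-0/round-2 cases do not apply)
    (hvalid : ∀ r' : ℕ, 2 < r' → ∀ v : Bool, valid r' v ↔
      ((v = decide ((r' - 1) % 2 = 1) ∧ ∃ S ⊆ P, n - t ≤ S.card ∧ ∀ p ∈ S, sent (r' - 2) p v) ∨
       (v ≠ decide ((r' - 1) % 2 = 1) ∧ ∃ S ⊆ P, n - t ≤ S.card ∧ ∀ p ∈ S, sent (r' - 1) p v)))
    -- no quorum for w in round r
    (hnoq : ¬ ∃ S ⊆ P, n - t ≤ S.card ∧ ∀ p ∈ S, sent r p w) :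
    ∀ r' : ℕ, r < r' → ¬ valid r' w ∧ ∀ p ∈ P, p ∉ F → ¬ sent r' p w := by
  intro r'
  induction r' using Nat.strong_induction_on with
  | _ r' IH =>
    intro hrr'
    have quor : ∀ m, r < m → m < r' →
        ¬ ∃ S ⊆ P, n - t ≤ S.card ∧ ∀ p ∈ S, sent m p w := by
      rintro m hm1 hm2 ⟨S, hS, hcard, hsend⟩
      have hnos := (IH m hm2 hm1).2
      have hSF : S ⊆ F := by
        intro p hp
        by_contra hpF
        exact hnos p (hS hp) hpF (hsend p hp)
      have := Finset.card_le_card hSF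
      omega
    have hnv : ¬ valid r' w := by
      intro hv
      rw [hvalid r' (by omega)] at hv
      rcases hv with ⟨hpar, S, hS, hcard, hsend⟩ | ⟨hpar, S, hS, hcard, hsend⟩
      · have h2 : r' = r + 1 ∨ r' - 2 = r ∨ r < r' - 2 := by omega
        rcases h2 with h2 | h2 | h2
        · subst h2
          rw [hw] at hpar
          simp only [Nat.add_sub_cancel, decide_eq_decide] at hpar
          omega
        · exact hnoq ⟨S, hS, hcard, by rwa [h2] at hsend⟩
        · exact quor (r' - 2) h2 (by omega) ⟨S, hS, hcard, hsend⟩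
      · have h2 : r' - 1 = r ∨ r < r' - 1 := by omega
        rcases h2 with h2 | h2
        · exact hnoq ⟨S, hS, hcard, by rwa [h2] at hsend⟩
        · exact quor (r' - 1) h2 (by omega) ⟨S, hS, hcard, hsend⟩
    exact ⟨hnv, fun p hp hpF hs => hnv (hbcast r' p hp hpF w hs)⟩
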